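/- arXiv:1908.10257 — 3 statements merged into one kernel-verified Lean document; each statement's English description precedes it below -/
import Mathlib

section
/- Let γ : ℝ^N × ℝ^N → ℝ be defined by γ(x,y) = 1/Γ(x,y) for x ≠ y and γ(x,x) = 0, where Γ is symmetric, positive, and finite off the diagonal. Then the 'geometric condition' — there exists θ ∈ (0,1) such that for all x,y and r > 0, if x ∉ Ω(y,r) then Ω(x,θr) ∩ Ω(y,θr) = ∅, where Ω(x,r) = {z : γ(x,z) < r} — holds if and only if γ satisfies a pseudo-triangle inequality: there exists c > 1 with γ(x,y) ≤ c(γ(x,z) + γ(z,y)) for all x,y,z. -/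
open Set

theorem stmt_0 {N : ℕ}
    (Γ γ : (Fin N → ℝ) → (Fin N → ℝ) → ℝ)
    (hΓpos : ∀ x y, x ≠ y → 0 < Γ x y)
    (hΓsym : ∀ x y, Γ x y = Γ y x)
    (hγdiag : ∀ x, γ x x = 0)
    (hγoff : ∀ x y, x ≠ y → γ x y = 1 / Γ x y) :
    (∃ θ : ℝ, θ ∈ Set.Ioo (0:ℝ) 1 ∧ ∀ (x y : Fin N → ℝ) (r : ℝ), 0 < r →
        x ∉ {z | γ y z < r} →
        {z | γ x z < θ * r} ∩ {z | γ y z < θ * r} = ∅) ↔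
    (∃ c : ℝ, 1 < c ∧ ∀ x y z : Fin N → ℝ, γ x y ≤ c * (γ x z + γ z y)) := by
  have hsym : ∀ x y, γ x y = γ y x := by
    intro x y
    by_cases h : x = y
    · subst h; rfl
    · rw [hγoff x y h, hγoff y x (Ne.symm h), hΓsym]
  have hnn : ∀ x y, 0 ≤ γ x y := by
    intro x y
    by_cases h : x = y
    · subst h; rw [hγdiag]
    · rw [hγoff x y h]
      have := hΓpos x y h
      positivity
  constructor
  · rintro ⟨θ, ⟨hθ0, hθ1⟩, hgeo⟩
    refine ⟨1/θ, one_lt_one_div hθ0 hθ1, ?_⟩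
    intro x y z
    rcases lt_or_ge 0 (γ x y) with hr | hr
    · have hx : x ∉ {w | γ y w < γ x y} := by
        simp only [mem_setOf_eq, not_lt]
        rw [hsym y x]
      have hemp := hgeo x y (γ x y) hr hx
      have hz : z ∉ {w | γ x w < θ * γ x y} ∩ {w | γ y w < θ * γ x y} := by
        rw [hemp]; exact notMem_empty z
      simp only [mem_inter_iff, mem_setOf_eq, not_and, not_lt] at hz
      have hsum : θ * γ x y ≤ γ x z + γ z y := by
        rcases lt_or_ge (γ x z) (θ * γ x y) with h1 | h1
        · have h2 := hz h1
          rw [hsym z y]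
          have := hnn x z
          linarith
        · have := hnn z y
          linarith
      rw [div_mul_eq_mul_div, le_div_iff₀ hθ0]
      linarith
    · have h0 : γ x y = 0 := le_antisymm hr (hnn x y)
      rw [h0]
      have h1 := hnn x z
      have h2 := hnn z y
      positivity
  · rintro ⟨c, hc, htri⟩
    have hc0 : (0:ℝ) < c := by linarith
    refine ⟨1/(2*c), ⟨by positivity, ?_⟩, ?_⟩
    · rw [div_lt_one (by positivity)]; linarith
    · intro x y r hr hx
      simp only [mem_setOf_eq, not_lt] at hx
      rw [eq_empty_iff_forall_notMem]
      rintro z ⟨hz1, hz2⟩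
      simp only [mem_setOf_eq] at hz1 hz2
      have key := htri y x z
      rw [hsym z x] at key
      have : γ y x < r := by
        calc γ y x ≤ c * (γ y z + γ x z) := key
        _ < c * (1/(2*c) * r + 1/(2*c) * r) := by
            apply mul_lt_mul_of_pos_left (by linarith) hc0
        _ = r := by field_simp; ring
      linarith
end

section
/- Assume the doubling estimate E(x,R) ≤ (R/r)^{Q-2}·E(x,r) and the inclusion comparison E(x,r) ≤ c₁²·(ρ/r)²·E(y,ρ) whenever B(x,r) ⊆ B(y,ρ), where (ℝ^N, d) is a metric space with B the d-balls and B(x, 2d(z,y)) ⊆ B(z, 3d(z,y)) whenever d(x,z) < d(z,y). Then there exists a constant c > 1 such that E(x, d(x,y)) ≤ c·(E(x, d(x,z)) + E(z, d(z,y))) for all x, y, z ∈ ℝ^N; explicitly one can take c = max{2^{Q-2}, 3^Q c₁²/4}. -/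
open Set

theorem stmt_8 {Npt : ℕ} (N Q : ℕ) (hN : 3 ≤ N) (hNQ : N < Q)
    (c₁ : ℝ) (hc₁ : 1 ≤ c₁)
    (d : (Fin Npt → ℝ) → (Fin Npt → ℝ) → ℝ)
    (hd_self : ∀ x, d x x = 0)
    (hd_pos : ∀ x y, x ≠ y → 0 < d x y)
    (hd_symm : ∀ x y, d x y = d y x)
    (hd_tri : ∀ x y z, d x z ≤ d x y + d y z)
    (E : (Fin Npt → ℝ) → ℝ → ℝ)
    (hEpos : ∀ x r, 0 < r → 0 < E x r)
    (hE0 : ∀ x, E x 0 = 0)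
    (hEmono : ∀ x, StrictMonoOn (E x) (Set.Ioi (0:ℝ)))
    (hgrow : ∀ x r R, 0 < r → r < R →
      (R / r) ^ (N - 2) * E x r ≤ E x R ∧ E x R ≤ (R / r) ^ (Q - 2) * E x r)
    (hincl : ∀ x y r ρ, 0 < r → 0 < ρ →
      {w | d x w < r} ⊆ {w | d y w < ρ} → E x r ≤ c₁ ^ 2 * (ρ / r) ^ 2 * E y ρ)
    (hball : ∀ x z y : Fin Npt → ℝ, d x z < d z y →
      {w | d x w < 2 * d z y} ⊆ {w | d z w < 3 * d z y}) :
    ∃ c : ℝ, 1 < c ∧ c = max ((2:ℝ) ^ (Q - 2)) (3 ^ Q * c₁ ^ 2 / 4) ∧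
      ∀ x y z : Fin Npt → ℝ, E x (d x y) ≤ c * (E x (d x z) + E z (d z y)) := by
  have hQ4 : 4 ≤ Q := by omega
  set c : ℝ := max ((2:ℝ) ^ (Q - 2)) (3 ^ Q * c₁ ^ 2 / 4) with hc
  have h2Q : (1:ℝ) < 2 ^ (Q - 2) := by
    apply one_lt_pow₀ one_lt_two
    omega
  have hc1 : 1 < c := lt_of_lt_of_le h2Q (le_max_left _ _)
  have hcpos : 0 < c := lt_trans one_pos hc1
  -- nonnegativity of d
  have dnn : ∀ x y, 0 ≤ d x y := by
    intro x y
    have h := hd_tri x y x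
    rw [hd_self, hd_symm y x] at h
    linarith
  have dzero : ∀ x y, d x y ≤ 0 → x = y := by
    intro x y h
    by_contra hne
    exact absurd h (not_le.mpr (hd_pos x y hne))
  have Enn : ∀ x r, 0 ≤ r → 0 ≤ E x r := by
    intro x r hr
    rcases eq_or_lt_of_le hr with h | h
    · rw [← h, hE0]
    · exact le_of_lt (hEpos x r h)
  have Emono : ∀ x r R, 0 < r → r ≤ R → E x r ≤ E x R := by
    intro x r R hr hrR
    rcases eq_or_lt_of_le hrR with h | h
    · rw [h]
    · exact le_of_lt (hEmono x (mem_Ioi.mpr hr) (mem_Ioi.mpr (lt_trans hr h)) h)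
  refine ⟨c, hc1, rfl, ?_⟩
  intro x y z
  have ha : 0 ≤ d x z := dnn x z
  have hb : 0 ≤ d z y := dnn z y
  have htri : d x y ≤ d x z + d z y := hd_tri x z y
  rcases le_or_gt (d x y) 0 with ht | ht
  · -- d x y = 0
    have : d x y = 0 := le_antisymm ht (dnn x y)
    rw [this, hE0]
    have h1 := Enn x (d x z) ha
    have h2 := Enn z (d z y) hb
    nlinarith
  rcases le_or_gt (d z y) (d x z) with hba | hab
  · -- b ≤ a, so t ≤ 2a
    have hapos : 0 < d x z := by
      by_contra h
      push_neg at h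
      linarith
    have ht2a : d x y ≤ 2 * d x z := by linarith
    have key : E x (d x y) ≤ 2 ^ (Q - 2) * E x (d x z) := by
      rcases le_or_gt (d x y) (d x z) with h | h
      · have h1 := Emono x (d x y) (d x z) ht h
        have h2 := Enn x (d x z) ha
        nlinarith
      · have h1 := (hgrow x (d x z) (d x y) hapos h).2
        have h2 : (d x y / d x z) ^ (Q - 2) ≤ 2 ^ (Q - 2) := by
          apply pow_le_pow_left₀ (by positivity)
          rw [div_le_iff₀ hapos]; linarith
        have h3 := Enn x (d x z) ha
        nlinarith
    have h2c : (2:ℝ) ^ (Q - 2) ≤ c := le_max_left _ _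
    have hEa := Enn x (d x z) ha
    have hEb := Enn z (d z y) hb
    nlinarith
  · -- a < b
    have hbpos : 0 < d z y := lt_of_le_of_lt ha hab
    have hinc := hball x z y hab
    have h1 := hincl x z (2 * d z y) (3 * d z y) (by linarith) (by linarith) hinc
    have hrat : (3 * d z y) / (2 * d z y) = 3 / 2 := by
      field_simp
    rw [hrat] at h1
    have h2 := (hgrow z (d z y) (3 * d z y) hbpos (by linarith)).2
    have hrat2 : (3 * d z y) / (d z y) = 3 := by field_simp
    rw [hrat2] at h2
    have h3 : E x (d x y) ≤ E x (2 * d z y) := Emono x _ _ ht (by linarith)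
    have hEb := Enn z (d z y) hb
    have hE3b : 0 ≤ E z (3 * d z y) := Enn z _ (by linarith)
    have hQsplit : (3:ℝ) ^ Q = 3 ^ (Q - 2) * 9 := by
      have : Q - 2 + 2 = Q := by omega
      rw [← this, pow_add]; norm_num
    have hcge : 3 ^ Q * c₁ ^ 2 / 4 ≤ c := le_max_right _ _
    have hc₁sq : (1:ℝ) ≤ c₁ ^ 2 := by nlinarith
    have h3pow : (0:ℝ) < 3 ^ (Q - 2) := by positivity
    have hEa := Enn x (d x z) ha
    -- E x (d x y) ≤ c₁^2 * (3/2)^2 * 3^(Q-2) * E z (d z y) = 3^Q c₁²/4 * E z b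
    have key : E x (d x y) ≤ 3 ^ Q * c₁ ^ 2 / 4 * E z (d z y) := by
      have hc₁pos : (0:ℝ) < c₁ ^ 2 := by positivity
      calc E x (d x y) ≤ E x (2 * d z y) := h3
        _ ≤ c₁ ^ 2 * (3 / 2) ^ 2 * E z (3 * d z y) := h1
        _ ≤ c₁ ^ 2 * (3 / 2) ^ 2 * (3 ^ (Q - 2) * E z (d z y)) := by nlinarith
        _ = 3 ^ Q * c₁ ^ 2 / 4 * E z (d z y) := by rw [hQsplit]; ring
    calc E x (d x y) ≤ 3 ^ Q * c₁ ^ 2 / 4 * E z (d z y) := key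
      _ ≤ c * E z (d z y) := by apply mul_le_mul_of_nonneg_right hcge hEb
      _ ≤ c * (E x (d x z) + E z (d z y)) := by nlinarith
end

section
/- Every half-space Π = {x ∈ ℝ^N : ⟨x,v⟩ ≥ h} (v ≠ 0, h ∈ ℝ) contains a non-degenerate δ_λ-cone, i.e. a set C with nonempty interior such that δ_λ(C) ⊆ C for every λ ≥ λ₀ for some λ₀ > 0. In fact C := {x ∈ Π : x_i v_i ≥ 0 for all i} works with λ₀ = 1. -/
theorem stmt_14 {N : ℕ} (σ : Fin N → ℝ) (hσ : ∀ i, 1 ≤ σ i)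
    (v : Fin N → ℝ) (hv : v ≠ 0) (h : ℝ) :
    ∃ C : Set (Fin N → ℝ),
      C = {x | h ≤ ∑ i, x i * v i ∧ ∀ i, 0 ≤ x i * v i} ∧
      C ⊆ {x | h ≤ ∑ i, x i * v i} ∧
      (interior C).Nonempty ∧
      ∃ lam₀ : ℝ, 0 < lam₀ ∧ ∀ lam : ℝ, lam₀ ≤ lam →
        (fun x : Fin N → ℝ => fun i => lam ^ (σ i) * x i) '' C ⊆ C := by
  set C : Set (Fin N → ℝ) := {x | h ≤ ∑ i, x i * v i ∧ ∀ i, 0 ≤ x i * v i} with hC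
  refine ⟨C, rfl, fun x hx => hx.1, ?_, 1, one_pos, ?_⟩
  · -- interior nonempty
    set U : Set (Fin N → ℝ) :=
      {x | h < ∑ i, x i * v i} ∩ ⋂ i, {x | v i = 0 ∨ 0 < x i * v i} with hU
    have hUopen : IsOpen U := by
      apply IsOpen.inter
      · have hc : Continuous fun x : Fin N → ℝ => ∑ i, x i * v i :=
          continuous_finset_sum _ fun i _ => (continuous_apply i).mul continuous_const
        exact isOpen_lt continuous_const hc
      · apply isOpen_iInter_of_finite
        intro i
        by_cases hvi : v i = 0
        · simp [hvi]
        · have : {x : Fin N → ℝ | v i = 0 ∨ 0 < x i * v i} = {x | 0 < x i * v i} := by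
            ext x; simp [hvi]
          rw [this]
          exact isOpen_lt continuous_const ((continuous_apply i).mul continuous_const)
    have hUC : U ⊆ C := by
      rintro x ⟨hx1, hx2⟩
      refine ⟨le_of_lt hx1, fun i => ?_⟩
      have := Set.mem_iInter.1 hx2 i
      rcases this with h0 | hpos
      · simp [h0]
      · exact le_of_lt hpos
    have hS : 0 < ∑ i, v i * v i := by
      have hvne : ∃ i, v i ≠ 0 := Function.ne_iff.1 hv
      obtain ⟨i₀, hi₀⟩ := hvne
      apply Finset.sum_pos' (fun i _ => mul_self_nonneg _)
      exact ⟨i₀, Finset.mem_univ _, mul_self_pos.2 hi₀⟩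
    set M : ℝ := (|h| + 1) / (∑ i, v i * v i) with hM
    have hMpos : 0 < M := div_pos (by positivity) hS
    have hmem : (fun i => M * v i) ∈ U := by
      constructor
      · have : ∑ i, (M * v i) * v i = M * ∑ i, v i * v i := by
          rw [Finset.mul_sum]; exact Finset.sum_congr rfl fun i _ => by ring
        rw [Set.mem_setOf_eq, this, hM, div_mul_cancel₀ _ (ne_of_gt hS)]
        calc h ≤ |h| := le_abs_self h
        _ < |h| + 1 := by linarith
      · apply Set.mem_iInter.2
        intro i
        by_cases hvi : v i = 0
        · exact Or.inl hvi
        · right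
          show 0 < M * v i * v i
          have heq : M * v i * v i = M * (v i * v i) := by ring
          rw [heq]
          exact mul_pos hMpos (mul_self_pos.2 hvi)
    exact ⟨_, interior_maximal hUC hUopen hmem⟩
  · -- invariance
    intro lam hlam
    rintro _ ⟨x, hx, rfl⟩
    have hlam0 : (0:ℝ) < lam := lt_of_lt_of_le one_pos hlam
    have hpow : ∀ i, 1 ≤ lam ^ (σ i) := fun i =>
      Real.one_le_rpow hlam (le_trans zero_le_one (hσ i))
    refine ⟨?_, fun i => ?_⟩
    · calc h ≤ ∑ i, x i * v i := hx.1
        _ ≤ ∑ i, (lam ^ (σ i) * x i) * v i := by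
          apply Finset.sum_le_sum
          intro i _
          have h1 : (lam ^ (σ i) * x i) * v i = lam ^ (σ i) * (x i * v i) := by ring
          rw [h1]
          nth_rewrite 1 [← one_mul (x i * v i)]
          exact mul_le_mul_of_nonneg_right (hpow i) (hx.2 i)
    · have h1 : (lam ^ (σ i) * x i) * v i = lam ^ (σ i) * (x i * v i) := by ring
      rw [h1]
      exact mul_nonneg (le_trans zero_le_one (hpow i)) (hx.2 i)
end
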